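/- Let 0 < γ < 1, A = √(1 − γ²), β = 1 + A, and let h be a real constant. On any open interval where 1 − h e^{Aξ} ≠ 0, the function y(ξ) = (h (γ/β) e^{Aξ} − β/γ)/(1 − h e^{Aξ}) satisfies the Riccati equation y'(ξ) = −(y(ξ) + (γ/2)(1 + y(ξ)²)); consequently U(ξ) = 4 arctan(y(ξ) + √(y(ξ)² + 1)) satisfies U'(ξ) = sin U(ξ) − γ on that interval. -/

import Mathlib

lemma sin4arctan (x : ℝ) : Real.sin (4 * Real.arctan x) = 4*x*(1-x^2)/(1+x^2)^2 := by
  have h4 : (4:ℝ) * Real.arctan x = 2*(2*Real.arctan x) := by ring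
  have hx : (0:ℝ) < 1 + x^2 := by positivity
  have hr2 : Real.sqrt (1+x^2)^2 = 1+x^2 := Real.sq_sqrt hx.le
  have hr0 : 0 < Real.sqrt (1+x^2) := Real.sqrt_pos.mpr hx
  rw [h4, Real.sin_two_mul, Real.sin_two_mul, Real.cos_two_mul, Real.sin_arctan,
    Real.cos_arctan]
  field_simp
  rw [show Real.sqrt (1+x^2)^4 = (Real.sqrt (1+x^2)^2)^2 by ring, hr2]
  ring


/-- Let 0 < γ < 1, A = √(1 − γ²), β = 1 + A, h ∈ ℝ. On any open interval
where 1 − h e^{Aξ} ≠ 0, the function y(ξ) = (h(γ/β)e^{Aξ} − β/γ)/(1 − h e^{Aξ}) satisfies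
the Riccati equation y' = −(y + (γ/2)(1 + y²)); consequently
U(ξ) = 4 arctan(y(ξ) + √(y(ξ)² + 1)) satisfies U' = sin U − γ on that interval. -/
theorem stmt14 (γ : ℝ) (hγ0 : 0 < γ) (hγ1 : γ < 1) (h : ℝ) (A β : ℝ)
    (hA : A = Real.sqrt (1 - γ ^ 2)) (hβ : β = 1 + A)
    (a b : ℝ) (hne : ∀ ξ ∈ Set.Ioo a b, 1 - h * Real.exp (A * ξ) ≠ 0)
    (y U : ℝ → ℝ)
    (hy : ∀ ξ : ℝ, y ξ = (h * (γ / β) * Real.exp (A * ξ) - β / γ) /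
      (1 - h * Real.exp (A * ξ)))
    (hU : ∀ ξ : ℝ, U ξ = 4 * Real.arctan (y ξ + Real.sqrt ((y ξ) ^ 2 + 1))) :
    ∀ ξ ∈ Set.Ioo a b,
      HasDerivAt y (-(y ξ + γ / 2 * (1 + (y ξ) ^ 2))) ξ ∧
      HasDerivAt U (Real.sin (U ξ) - γ) ξ := by
  have hγne : γ ≠ 0 := ne_of_gt hγ0
  have hA2 : A ^ 2 = 1 - γ ^ 2 := by
    rw [hA, Real.sq_sqrt]; nlinarith
  have hA0 : 0 ≤ A := by rw [hA]; exact Real.sqrt_nonneg _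
  have hβ0 : β ≠ 0 := by rw [hβ]; positivity
  intro ξ hξ
  have hD : 1 - h * Real.exp (A * ξ) ≠ 0 := hne ξ hξ
  set E := Real.exp (A * ξ) with hE
  -- derivative of y
  have hexp : HasDerivAt (fun t => Real.exp (A * t)) (A * E) ξ := by
    have h1 : HasDerivAt (fun t : ℝ => A * t) A ξ := by
      simpa using (hasDerivAt_id ξ).const_mul A
    simpa [hE, Function.comp_def, mul_comm] using (Real.hasDerivAt_exp (A * ξ)).comp ξ h1
  have hnum : HasDerivAt (fun t => h * (γ / β) * Real.exp (A * t) - β / γ)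
      (h * (γ / β) * (A * E)) ξ := (hexp.const_mul _).sub_const _
  have hden : HasDerivAt (fun t => 1 - h * Real.exp (A * t))
      (-(h * (A * E))) ξ := (hexp.const_mul h).const_sub 1
  set p := γ / β with hp
  set q := β / γ with hq
  have f1 : p * q = 1 := by rw [hp, hq]; field_simp
  have f2 : γ * (p + q) = 2 := by
    rw [hp, hq, hβ]
    have : (1:ℝ) + A ≠ 0 := by positivity
    field_simp
    linear_combination hA2
  have f3 : γ * (q - p) = 2 * A := by
    rw [hp, hq, hβ]
    have : (1:ℝ) + A ≠ 0 := by positivity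
    field_simp
    linear_combination -hA2
  have main : h * p * (A * E) * (1 - h * E) - (h * p * E - q) * (-(h * (A * E)))
      = -((h * p * E - q) * (1 - h * E)
        + γ / 2 * ((1 - h * E) ^ 2 + (h * p * E - q) ^ 2)) := by
    linear_combination (γ*h*E - γ/2 - γ/2*h^2*E^2) * f1
      + (q/2 + p*h^2*E^2/2 - h*E*(p+q)/2) * f2 + (h*E*(q-p)/2) * f3
  clear_value p q
  have hy' : HasDerivAt y (-(y ξ + γ / 2 * (1 + (y ξ) ^ 2))) ξ := by
    have hd := hnum.div hden hD
    have hyfun := funext hy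
    rw [hyfun]
    refine hd.congr_deriv ?_
    symm
    rw [show Real.exp (A * ξ) = E from rfl]
    have lhs_eq : -((h * p * E - q) / (1 - h * E)
        + γ / 2 * (1 + ((h * p * E - q) / (1 - h * E)) ^ 2))
        = (-((h * p * E - q) * (1 - h * E)
          + γ / 2 * ((1 - h * E) ^ 2 + (h * p * E - q) ^ 2))) / (1 - h * E) ^ 2 := by
      field_simp
    rw [lhs_eq, ← main]
  refine ⟨hy', ?_⟩
  -- Part 2
  set Y := y ξ with hY
  have hs0 : (0:ℝ) < Real.sqrt (Y ^ 2 + 1) := Real.sqrt_pos.mpr (by positivity)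
  set s := Real.sqrt (Y ^ 2 + 1) with hs
  have hs2 : s ^ 2 = Y ^ 2 + 1 := Real.sq_sqrt (by positivity)
  have ht0 : 0 < Y + s := by nlinarith [hs2, hs0, sq_nonneg (Y + s), sq_nonneg (Y - s)]
  set v := -(Y + γ / 2 * (1 + Y ^ 2)) with hv
  have hsq : HasDerivAt (fun t => (y t) ^ 2 + 1) (2 * Y * v) ξ := by
    have := (hy'.pow 2).add_const 1
    simpa [hY] using this
  have hsqrt : HasDerivAt (fun t => Real.sqrt ((y t) ^ 2 + 1)) (2 * Y * v / (2 * s)) ξ := by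
    have := hsq.sqrt (by positivity)
    simpa [hs, hY] using this
  have hinner : HasDerivAt (fun t => y t + Real.sqrt ((y t) ^ 2 + 1))
      (v + 2 * Y * v / (2 * s)) ξ := hy'.add hsqrt
  have harc : HasDerivAt (fun t => Real.arctan (y t + Real.sqrt ((y t) ^ 2 + 1)))
      (1 / (1 + (Y + s) ^ 2) * (v + 2 * Y * v / (2 * s))) ξ := by
    have := (Real.hasDerivAt_arctan (Y + s)).comp ξ hinner
    simpa [Function.comp_def, hY, hs] using this
  have hU' : HasDerivAt U (4 * (1 / (1 + (Y + s) ^ 2) * (v + 2 * Y * v / (2 * s)))) ξ := by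
    have hUfun : U = fun t => 4 * Real.arctan (y t + Real.sqrt ((y t) ^ 2 + 1)) :=
      funext hU
    rw [hUfun]
    simpa [mul_comm] using harc.const_mul 4
  convert hU' using 1
  -- value identity
  have hsinU : Real.sin (U ξ) = -(2 * Y) / (1 + Y ^ 2) := by
    rw [hU ξ, ← hY, ← hs, sin4arctan]
    have h1t : 1 + (Y + s) ^ 2 = 2 * s * (Y + s) := by linear_combination -hs2
    have h2t : 1 - (Y + s) ^ 2 = -(2 * Y * (Y + s)) := by linear_combination -hs2
    rw [h1t, h2t]
    have hY1 : (0:ℝ) < 1 + Y ^ 2 := by positivity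
    field_simp
    linear_combination 4 * Y * hs2
  rw [hsinU, hv]
  have hY1 : (1:ℝ) + Y ^ 2 ≠ 0 := by positivity
  have h1t : (1:ℝ) + (Y + s) ^ 2 ≠ 0 := by positivity
  field_simp
  ring_nf
  linear_combination (-4*Y*γ - 4*Y*s - 2*Y^2*γ*s - 8*Y^2 - 4*Y^3*γ - 2*γ*s) * hs2
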